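/- The road space of a Suslin tree is a ccc branchwise-real tree order that admits no continuous grading. -/

import Mathlib

/-- A partial order is rooted if it has a minimum element. -/
def IsRooted (X : Type*) [PartialOrder X] : Prop := ∃ r : X, ∀ x, r ≤ x

/-- The set of predecessors of every element is linearly ordered. -/
def DownLinear (X : Type*) [PartialOrder X] : Prop :=
  ∀ x y z : X, y ≤ x → z ≤ x → y ≤ z ∨ z ≤ y

/-- A well-stratified tree: a rooted partial order in which the set of
predecessors of every element is well-ordered. -/
def IsWSTree (T : Type*) [PartialOrder T] : Prop :=
  IsRooted T ∧ DownLinear T ∧ ∀ x : T, (Set.Iio x).IsWF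

/-- A branchwise-real tree order: a rooted partial order with linearly
ordered predecessor sets, in which every branch (maximal chain) is
order-isomorphic to a real interval, and any two elements have a meet. -/
def IsBRTO (X : Type*) [PartialOrder X] : Prop :=
  IsRooted X ∧ DownLinear X ∧
  (∀ B : Set X, IsMaxChain (· ≤ ·) B →
      ∃ I : Set ℝ, I.OrdConnected ∧ Nonempty (B ≃o I)) ∧
  (∀ x y : X, ∃ m : X, IsGLB {x, y} m)

/-- A continuous grading: a strictly monotonic real-valued map restricting
to an order isomorphism `[x,y] → [ℓ x, ℓ y]` for all `x < y` (these intervals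
are chains, so a strictly monotonic bijection between them is an order
isomorphism). -/
def IsContinuousGrading {X : Type*} [PartialOrder X] (ℓ : X → ℝ) : Prop :=
  StrictMono ℓ ∧ ∀ x y : X, x < y →
    Set.BijOn ℓ (Set.Icc x y) (Set.Icc (ℓ x) (ℓ y))

/-- An element has successor rank iff its set of strict predecessors has a
maximum, i.e. it has an immediate predecessor. -/
def SuccRank {T : Type*} [PartialOrder T] (x : T) : Prop :=
  ∃ y, y < x ∧ ∀ z, z < x → z ≤ y

/-- The road space of a tree `T`: the suborder of the lexicographic product
`T ×ₗ (0,1]` consisting of the pairs `⟨x,t⟩` with `t = 1` or `x` of successor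
rank. -/
abbrev Road (T : Type*) [PartialOrder T] : Type _ :=
  {p : T ×ₗ (Set.Ioc (0:ℝ) 1) // ((ofLex p).2 : ℝ) = 1 ∨ SuccRank (ofLex p).1}

namespace RoadAux
variable {T : Type*} [PartialOrder T]

def rt (p : Road T) : T := (ofLex p.val).1
def rv (p : Road T) : ℝ := ((ofLex p.val).2 : ℝ)
lemma rv_pos (p : Road T) : 0 < rv p := (ofLex p.val).2.2.1
lemma rv_le_one (p : Road T) : rv p ≤ 1 := (ofLex p.val).2.2.2
lemma rv_or (p : Road T) : rv p = 1 ∨ SuccRank (rt p) := p.2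
lemma road_le_iff (p q : Road T) :
    p ≤ q ↔ rt p < rt q ∨ (rt p = rt q ∧ rv p ≤ rv q) := by
  show p.val ≤ q.val ↔ _
  rw [show p.val = toLex (ofLex p.val) from rfl, show q.val = toLex (ofLex q.val) from rfl,
    Prod.Lex.le_iff]
  simp [rt, rv, Subtype.coe_le_coe]
lemma road_lt_iff (p q : Road T) :
    p < q ↔ rt p < rt q ∨ (rt p = rt q ∧ rv p < rv q) := by
  show p.val < q.val ↔ _
  rw [show p.val = toLex (ofLex p.val) from rfl, show q.val = toLex (ofLex q.val) from rfl,
    Prod.Lex.lt_iff]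
  simp [rt, rv, Subtype.coe_lt_coe]
lemma road_ext {p q : Road T} (h1 : rt p = rt q) (h2 : rv p = rv q) : p = q := by
  apply Subtype.ext
  exact (Prod.ext h1 (Subtype.ext h2) : ofLex p.val = ofLex q.val)
def mk (x : T) (t : ℝ) (ht : t ∈ Set.Ioc (0:ℝ) 1) (h : t = 1 ∨ SuccRank x) : Road T :=
  ⟨toLex (x, ⟨t, ht⟩), h⟩
@[simp] lemma rt_mk (x : T) (t : ℝ) (ht) (h) : rt (mk x t ht h) = x := rfl
@[simp] lemma rv_mk (x : T) (t : ℝ) (ht) (h) : rv (mk x t ht h) = t := rfl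

/-- the canonical point `(x,1)` -/
def top (x : T) : Road T := mk x 1 ⟨zero_lt_one, le_refl 1⟩ (Or.inl rfl)
@[simp] lemma rt_top (x : T) : rt (top x) = x := rfl
@[simp] lemma rv_top (x : T) : rv (top x) = 1 := rfl

lemma top_strictMono : StrictMono (top (T := T)) := by
  intro x y h
  rw [road_lt_iff]
  exact Or.inl h

lemma le_top (p : Road T) : p ≤ top (rt p) := by
  rw [road_le_iff]
  exact Or.inr ⟨rfl, rv_le_one p⟩

/-- two elements with comparable first coordinates are comparable -/
lemma comparable_of_rt {p q : Road T} (h : rt p ≤ rt q ∨ rt q ≤ rt p) :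
    p ≤ q ∨ q ≤ p := by
  rcases h with h | h
  · rcases lt_or_eq_of_le h with h' | h'
    · exact Or.inl ((road_le_iff p q).mpr (Or.inl h'))
    · rcases le_total (rv p) (rv q) with h2 | h2
      · exact Or.inl ((road_le_iff p q).mpr (Or.inr ⟨h', h2⟩))
      · exact Or.inr ((road_le_iff q p).mpr (Or.inr ⟨h'.symm, h2⟩))
  · rcases lt_or_eq_of_le h with h' | h'
    · exact Or.inr ((road_le_iff q p).mpr (Or.inl h'))
    · rcases le_total (rv p) (rv q) with h2 | h2
      · exact Or.inl ((road_le_iff p q).mpr (Or.inr ⟨h'.symm, h2⟩))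
      · exact Or.inr ((road_le_iff q p).mpr (Or.inr ⟨h', h2⟩))

lemma road_rooted (hR : IsRooted T) : IsRooted (Road T) := by
  obtain ⟨r, hr⟩ := hR
  refine ⟨top r, fun p => ?_⟩
  rcases eq_or_lt_of_le (hr (rt p)) with h | h
  · rw [road_le_iff]
    refine Or.inr ⟨h, ?_⟩
    rcases rv_or p with h1 | h1
    · simp [h1]
    · exfalso
      obtain ⟨y, hy, _⟩ := h1
      rw [← h] at hy
      exact absurd (hr y) (not_le_of_gt hy)
  · exact (road_le_iff _ _).mpr (Or.inl h)

lemma road_downLinear (hDL : DownLinear T) : DownLinear (Road T) := by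
  intro x y z hy hz
  have h1 : rt y ≤ rt x := by
    rcases (road_le_iff y x).mp hy with h | h
    exacts [le_of_lt h, le_of_eq h.1]
  have h2 : rt z ≤ rt x := by
    rcases (road_le_iff z x).mp hz with h | h
    exacts [le_of_lt h, le_of_eq h.1]
  exact comparable_of_rt (hDL (rt x) (rt y) (rt z) h1 h2)

lemma isGLB_pair_left {p q : Road T} (h : p ≤ q) : IsGLB {p, q} p := by
  constructor
  · rintro r (rfl | rfl)
    · exact le_refl _
    · exact h
  · intro z hz
    exact hz (Set.mem_insert p _)

lemma road_meets (hH : ∀ x y : T, ∃ m : T, IsGLB {x, y} m) :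
    ∀ p q : Road T, ∃ m : Road T, IsGLB {p, q} m := by
  intro p q
  by_cases hle : p ≤ q
  · exact ⟨p, isGLB_pair_left hle⟩
  by_cases hge : q ≤ p
  · refine ⟨q, ?_⟩
    rw [Set.pair_comm]
    exact isGLB_pair_left hge
  obtain ⟨m, hm⟩ := hH (rt p) (rt q)
  have hmp : m ≤ rt p := hm.1 (Set.mem_insert _ _)
  have hmq : m ≤ rt q := hm.1 (Set.mem_insert_of_mem _ rfl)
  have hne : ∀ x y : Road T, ¬ x ≤ y → ¬ y ≤ x → rt x ≠ rt y := by
    intro x y hx hy hxy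
    rcases comparable_of_rt (Or.inl (le_of_eq hxy)) with h | h
    exacts [hx h, hy h]
  have hmp' : m < rt p := by
    rcases lt_or_eq_of_le hmp with h | h
    · exact h
    · exfalso
      have hmq2 : rt p ≤ rt q := h ▸ hmq
      rcases lt_or_eq_of_le hmq2 with h' | h'
      · exact hle ((road_le_iff p q).mpr (Or.inl h'))
      · exact hne p q hle hge h'
  have hmq' : m < rt q := by
    rcases lt_or_eq_of_le hmq with h | h
    · exact h
    · exfalso
      have hmp2 : rt q ≤ rt p := h ▸ hmp
      rcases lt_or_eq_of_le hmp2 with h' | h'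
      · exact hge ((road_le_iff q p).mpr (Or.inl h'))
      · exact hne p q hle hge h'.symm
  refine ⟨top m, ?_, ?_⟩
  · rintro r (rfl | rfl)
    · exact (road_le_iff _ _).mpr (Or.inl hmp')
    · exact (road_le_iff _ _).mpr (Or.inl hmq')
  · intro z hz
    have hz1 : rt z ≤ rt p := by
      rcases (road_le_iff z p).mp (hz (Set.mem_insert _ _)) with h | h
      exacts [le_of_lt h, le_of_eq h.1]
    have hz2 : rt z ≤ rt q := by
      rcases (road_le_iff z q).mp (hz (Set.mem_insert_of_mem _ rfl)) with h | h
      exacts [le_of_lt h, le_of_eq h.1]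
    have : rt z ≤ m := hm.2 (by rintro r (rfl | rfl); exacts [hz1, hz2])
    rcases lt_or_eq_of_le this with h | h
    · exact (road_le_iff _ _).mpr (Or.inl h)
    · exact (road_le_iff _ _).mpr (Or.inr ⟨h, by simpa using rv_le_one z⟩)


lemma road_ccc (hanti : ∀ A : Set T, IsAntichain (· ≤ ·) A → A.Countable) :
    ∀ A : Set (Road T), IsAntichain (· ≤ ·) A → A.Countable := by
  intro A hA
  have hinj : Set.InjOn rt A := by
    intro p hp q hq h
    by_contra hne
    rcases comparable_of_rt (Or.inl (le_of_eq h)) with hc | hc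
    · exact hA hp hq hne hc
    · exact hA hq hp (Ne.symm hne) hc
  have himg : IsAntichain (· ≤ ·) (rt '' A) := by
    rintro x ⟨p, hp, rfl⟩ y ⟨q, hq, rfl⟩ hne hle
    have hlt : rt p < rt q := lt_of_le_of_ne hle hne
    have : p ≤ q := (road_le_iff p q).mpr (Or.inl hlt)
    exact hA hp hq (fun h => hne (by rw [h])) this
  obtain ⟨g, hg⟩ := Set.countable_iff_exists_injOn.mp (hanti _ himg)
  refine Set.countable_iff_exists_injOn.mpr ⟨fun p => g (rt p), ?_⟩
  intro p hp q hq h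
  exact hinj hp hq (hg (Set.mem_image_of_mem rt hp) (Set.mem_image_of_mem rt hq) h)


section Branch
variable {T : Type*} [PartialOrder T]

lemma mem_of_maxChain {B : Set (Road T)} (hB : IsMaxChain (· ≤ ·) B) {p : Road T}
    (h : ∀ q ∈ B, p ≤ q ∨ q ≤ p) : p ∈ B := by
  have hc : IsChain (· ≤ ·) (insert p B) :=
    hB.1.insert (fun b hb _ => h b hb)
  have := hB.2 hc (Set.subset_insert p B)
  rw [this]
  exact Set.mem_insert p B

/-- the projection of a maximal chain -/
lemma proj_facts (hDL : DownLinear T) {B : Set (Road T)} (hB : IsMaxChain (· ≤ ·) B) :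
    (∀ x ∈ rt '' B, ∀ y ∈ rt '' B, x ≤ y ∨ y ≤ x) ∧
    (∀ x ∈ rt '' B, ∀ y, y < x → y ∈ rt '' B) ∧
    (∀ p : Road T, rt p ∈ rt '' B → p ∈ B) := by
  have hcomp : ∀ x ∈ rt '' B, ∀ y ∈ rt '' B, x ≤ y ∨ y ≤ x := by
    rintro x ⟨p, hp, rfl⟩ y ⟨q, hq, rfl⟩
    by_cases h : p = q
    · exact Or.inl (le_of_eq (by rw [h]))
    · rcases hB.1 hp hq h with h' | h'
      · rcases (road_le_iff p q).mp h' with h'' | h''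
        exacts [Or.inl (le_of_lt h''), Or.inl (le_of_eq h''.1)]
      · rcases (road_le_iff q p).mp h' with h'' | h''
        exacts [Or.inr (le_of_lt h''), Or.inr (le_of_eq h''.1)]
  have hfiber : ∀ p : Road T, rt p ∈ rt '' B → p ∈ B := by
    intro p hp
    apply mem_of_maxChain hB
    intro q hq
    exact comparable_of_rt (hcomp _ hp _ (Set.mem_image_of_mem rt hq))
  refine ⟨hcomp, ?_, hfiber⟩
  intro x hx y hy
  have : top y ∈ B := by
    apply mem_of_maxChain hB
    intro q hq
    have hqx : rt q ≤ x ∨ x ≤ rt q := hcomp _ (Set.mem_image_of_mem rt hq) _ hx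
    apply comparable_of_rt
    rcases hqx with h | h
    · simpa using hDL x y (rt q) (le_of_lt hy) h
    · exact Or.inl (by simpa using le_of_lt (lt_of_lt_of_le hy h))
  exact ⟨top y, this, rfl⟩

end Branch


lemma road_branch (hDL : DownLinear T) (hWF : ∀ x : T, (Set.Iio x).IsWF)
    (hchain : ∀ C : Set T, IsChain (· ≤ ·) C → C.Countable)
    (B : Set (Road T)) (hB : IsMaxChain (· ≤ ·) B) :
    ∃ I : Set ℝ, I.OrdConnected ∧ Nonempty (↥B ≃o ↥I) := by
  classical
  obtain ⟨hPcomp, hPdc, hfiber⟩ := proj_facts hDL hB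
  set P : Set T := rt '' B with hP
  have hPchain : IsChain (· ≤ ·) P := fun x hx y hy _ => hPcomp x hx y hy
  have hPcount : P.Countable := hchain P hPchain
  obtain ⟨g, hg⟩ := Set.countable_iff_exists_injective.mp hPcount
  obtain ⟨w, hwdef⟩ : ∃ w : T → ℝ,
      ∀ z, w z = if h : z ∈ P then (2:ℝ)⁻¹ ^ (g ⟨z, h⟩) else 0 := ⟨_, fun _ => rfl⟩
  have hw0 : ∀ z, 0 ≤ w z := by
    intro z
    rw [hwdef]
    split
    · positivity
    · exact le_refl 0
  have hwpos : ∀ z ∈ P, 0 < w z := by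
    intro z hz
    rw [hwdef, dif_pos hz]
    positivity
  have hwsum : Summable w := by
    have h1 : Summable (w ∘ (Subtype.val : ↥P → T)) := by
      have he : (w ∘ (Subtype.val : ↥P → T)) = (fun n => (2:ℝ)⁻¹ ^ n) ∘ g := by
        funext z
        simp only [Function.comp_apply]
        rw [hwdef, dif_pos z.2]
      rw [he]
      exact (summable_geometric_of_lt_one (by norm_num) (by norm_num)).comp_injective hg
    have h2 := summable_subtype_iff_indicator.mp h1
    rwa [Set.indicator_eq_self.mpr ?_] at h2
    intro z hz
    by_contra h
    exact hz (by rw [hwdef, dif_neg h])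
  set WS : Set T := {z | SuccRank z} with hWS
  have hsum : ∀ A : Set T, Summable (A.indicator w) := fun A => hwsum.indicator A
  obtain ⟨S, hSdef⟩ : ∃ S : T → ℝ,
      ∀ x, S x = ∑' z, ((Set.Iio x ∩ WS).indicator w) z := ⟨_, fun _ => rfl⟩
  obtain ⟨G, hGdef⟩ : ∃ G : T → ℝ,
      ∀ x, G x = ∑' z, ((Set.Iic x ∩ WS).indicator w) z := ⟨_, fun _ => rfl⟩
  have hmono : ∀ A A' : Set T, A ⊆ A' →
      ∑' z, A.indicator w z ≤ ∑' z, A'.indicator w z := by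
    intro A A' hAA
    exact Summable.tsum_le_tsum (fun z => Set.indicator_le_indicator_of_subset hAA hw0 z)
      (hsum A) (hsum A')
  have hGS : ∀ x, G x = S x + (if SuccRank x then w x else 0) := by
    intro x
    have hset : Set.Iic x ∩ WS = (Set.Iio x ∩ WS) ∪ ({x} ∩ WS) := by
      ext z
      simp only [Set.mem_inter_iff, Set.mem_Iic, Set.mem_Iio, Set.mem_union,
        Set.mem_singleton_iff]
      constructor
      · rintro ⟨hz, hzw⟩
        rcases lt_or_eq_of_le hz with h | h
        exacts [Or.inl ⟨h, hzw⟩, Or.inr ⟨h, hzw⟩]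
      · rintro (⟨h, hzw⟩ | ⟨h, hzw⟩)
        exacts [⟨le_of_lt h, hzw⟩, ⟨le_of_eq h, hzw⟩]
    have hdisj : Disjoint (Set.Iio x ∩ WS) ({x} ∩ WS) := by
      rw [Set.disjoint_left]
      rintro z ⟨hz1, _⟩ ⟨hz2, _⟩
      rw [Set.mem_singleton_iff] at hz2
      exact absurd (hz2 ▸ hz1) (lt_irrefl x)
    rw [hGdef, hset, Set.indicator_union_of_disjoint hdisj, Summable.tsum_add (hsum _) (hsum _),
      ← hSdef]
    congr 1
    by_cases hx : SuccRank x
    · have h1 : ({x} : Set T) ∩ WS = {x} := by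
        rw [Set.inter_eq_left]
        rintro z rfl
        exact hx
      have h2 : ({x} : Set T).indicator w = fun z => if z = x then w x else 0 := by
        funext z
        by_cases h : z = x <;> simp [Set.indicator, h]
      rw [h1, h2, if_pos hx]
      exact tsum_ite_eq x (fun _ => w x)
    · have h1 : ({x} : Set T) ∩ WS = ∅ := by
        ext z
        simp only [Set.mem_inter_iff, Set.mem_singleton_iff, Set.mem_empty_iff_false, iff_false,
          not_and]
        rintro rfl
        exact hx
      rw [h1, if_neg hx]
      simp
  have hGleS : ∀ x y : T, x < y → G x ≤ S y := by
    intro x y hxy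
    rw [hGdef, hSdef]
    exact hmono _ _ (fun z hz => ⟨lt_of_le_of_lt hz.1 hxy, hz.2⟩)
  have hSleG : ∀ x : T, S x ≤ G x := by
    intro x
    rw [hGdef, hSdef]
    exact hmono _ _ (fun z hz => ⟨le_of_lt hz.1, hz.2⟩)
  obtain ⟨F, hFdef⟩ : ∃ F : Road T → ℝ,
      ∀ p, F p = S (rt p) + (if SuccRank (rt p) then rv p * w (rt p) else 0) :=
    ⟨_, fun _ => rfl⟩
  have hSnn : ∀ x, 0 ≤ S x := by
    intro x
    rw [hSdef]
    exact tsum_nonneg (fun z => Set.indicator_nonneg (fun a _ => hw0 a) z)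
  have hFnn : ∀ p, 0 ≤ F p := by
    intro p
    rw [hFdef]
    apply add_nonneg (hSnn _)
    split
    · exact mul_nonneg (le_of_lt (rv_pos p)) (hw0 _)
    · exact le_refl 0
  have hFleG : ∀ p, F p ≤ G (rt p) := by
    intro p
    rw [hFdef, hGS]
    apply add_le_add (le_refl _)
    split
    · exact mul_le_of_le_one_left (hw0 _) (rv_le_one p)
    · exact le_refl 0
  have hFtop : ∀ x, F (top x) = G x := by
    intro x
    rw [hFdef, hGS, rt_top, rv_top]
    split <;> simp
  have hz0 : ∀ x y : T, x < y → ¬ SuccRank y → ∃ z, x < z ∧ z < y ∧ SuccRank z := by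
    intro x y hxy hy
    have hne : {z | x < z ∧ z < y}.Nonempty := by
      by_contra h
      rw [Set.not_nonempty_iff_eq_empty] at h
      apply hy
      refine ⟨x, hxy, fun z hz => ?_⟩
      rcases hDL y z x (le_of_lt hz) (le_of_lt hxy) with h' | h'
      · exact h'
      · rcases lt_or_eq_of_le h' with h'' | h''
        · exact absurd (Set.mem_setOf_eq ▸ ⟨h'', hz⟩ : z ∈ {z | x < z ∧ z < y})
            (by rw [h]; exact Set.notMem_empty z)
        · exact le_of_eq h''.symm
    have hwf : {z | x < z ∧ z < y}.IsWF := (hWF y).mono (fun z hz => hz.2)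
    have hz0m := hwf.min_mem hne
    refine ⟨hwf.min hne, hz0m.1, hz0m.2, x, hz0m.1, fun u hu => ?_⟩
    have huy : u < y := lt_trans hu hz0m.2
    rcases hDL y u x (le_of_lt huy) (le_of_lt hxy) with h' | h'
    · exact h'
    · rcases lt_or_eq_of_le h' with h'' | h''
      · exact absurd hu (hwf.not_lt_min hne ⟨h'', huy⟩)
      · exact le_of_eq h''.symm
  have hFmono : ∀ p ∈ B, ∀ q ∈ B, p < q → F p < F q := by
    intro p hp q hq hpq
    rcases (road_lt_iff p q).mp hpq with hlt | ⟨heq, hrv⟩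
    · have hyP : rt q ∈ P := Set.mem_image_of_mem rt hq
      have h0 : F p ≤ G (rt p) := hFleG p
      by_cases hsy : SuccRank (rt q)
      · have h1 : G (rt p) ≤ S (rt q) := hGleS _ _ hlt
        have h2 : S (rt q) < F q := by
          rw [hFdef, if_pos hsy]
          have := mul_pos (rv_pos q) (hwpos _ hyP)
          linarith
        linarith
      · obtain ⟨z, hxz, hzy, hsz⟩ := hz0 _ _ hlt hsy
        have hzP : z ∈ P := hPdc _ hyP z hzy
        have h1 : G (rt p) ≤ S z := hGleS _ _ hxz
        have h2 : G z ≤ S (rt q) := hGleS _ _ hzy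
        have h3 : S z < G z := by
          rw [hGS z, if_pos hsz]
          have := hwpos z hzP
          linarith
        have h4 : F q = S (rt q) := by rw [hFdef, if_neg hsy, add_zero]
        linarith
    · have hsucc : SuccRank (rt p) := by
        rcases rv_or p with h | h
        · exfalso
          have h1 := rv_le_one q
          rw [h] at hrv
          linarith
        · exact h
      have hpP : rt p ∈ P := Set.mem_image_of_mem rt hp
      rw [hFdef, hFdef, ← heq, if_pos hsucc, if_pos hsucc]
      have hwp := hwpos _ hpP
      have := mul_lt_mul_of_pos_right hrv hwp
      linarith
  obtain ⟨FB, hFBdef⟩ : ∃ FB : ↥B → ℝ, ∀ p, FB p = F p.1 := ⟨_, fun _ => rfl⟩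
  have hFBlt : ∀ p q : ↥B, p < q → FB p < FB q := by
    intro p q h
    rw [hFBdef, hFBdef]
    exact hFmono p.1 p.2 q.1 q.2 (Subtype.coe_lt_coe.mpr h)
  have htotal : ∀ p q : ↥B, p ≤ q ∨ q ≤ p := by
    intro p q
    by_cases h : p = q
    · exact Or.inl (le_of_eq h)
    · rcases hB.1 p.2 q.2 (fun hh => h (Subtype.ext hh)) with h' | h'
      exacts [Or.inl h', Or.inr h']
  have hFBle : ∀ p q : ↥B, FB p ≤ FB q ↔ p ≤ q := by
    intro p q
    constructor
    · intro h
      rcases htotal p q with h' | h'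
      · exact h'
      · rcases lt_or_eq_of_le h' with h'' | h''
        · exact absurd h (not_le.mpr (hFBlt _ _ h''))
        · exact le_of_eq h''.symm
    · intro h
      rcases lt_or_eq_of_le h with h' | h'
      exacts [le_of_lt (hFBlt _ _ h'), le_of_eq (by rw [h'])]
  have hFBinj : Function.Injective FB := by
    intro p q h
    exact le_antisymm ((hFBle p q).mp (le_of_eq h)) ((hFBle q p).mp (le_of_eq h.symm))
  refine ⟨Set.range FB, ?_, ?_⟩
  · -- OrdConnected
    refine ⟨fun a ha b hb c hc => ?_⟩
    obtain ⟨p, rfl⟩ := ha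
    obtain ⟨q, rfl⟩ := hb
    rw [hFBdef] at hc
    rw [hFBdef] at hc
    have hyP : rt q.1 ∈ P := Set.mem_image_of_mem rt q.2
    have hUwf : {z | z ≤ rt q.1 ∧ c ≤ G z}.IsWF := by
      refine ((hWF (rt q.1)).insert (rt q.1)).mono ?_
      rintro z ⟨hz, _⟩
      rcases lt_or_eq_of_le hz with h | h
      · exact Set.mem_insert_of_mem _ h
      · rw [h]; exact Set.mem_insert _ _
    have hUne : {z | z ≤ rt q.1 ∧ c ≤ G z}.Nonempty :=
      ⟨rt q.1, le_refl _, le_trans hc.2 (hFleG q.1)⟩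
    have hxsU := hUwf.min_mem hUne
    set xs := hUwf.min hUne with hxs
    have hxsmin : ∀ z, z ≤ rt q.1 → z < xs → G z < c := by
      intro z h1 h2
      by_contra h
      exact hUwf.not_lt_min hUne ⟨h1, not_lt.mp h⟩ h2
    have hxsP : xs ∈ P := by
      rcases lt_or_eq_of_le hxsU.1 with h | h
      · exact hPdc _ hyP xs h
      · rw [h]; exact hyP
    have hcnn : 0 ≤ c := le_trans (hFnn p.1) hc.1
    rcases eq_or_lt_of_le hxsU.2 with hce | hclt
    · exact ⟨⟨top xs, hfiber _ hxsP⟩, by rw [hFBdef, hFtop]; exact hce.symm⟩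
    · by_cases hsx : SuccRank xs
      · obtain ⟨m, hm1, hm2⟩ := id hsx
        have hGm : G m < c := hxsmin m (le_trans (le_of_lt hm1) hxsU.1) hm1
        have hSxs : S xs ≤ G m := by
          rw [hSdef, hGdef]
          exact hmono _ _ (fun z hz => ⟨hm2 z hz.1, hz.2⟩)
        have hGxs : G xs = S xs + w xs := by rw [hGS, if_pos hsx]
        have hwx := hwpos xs hxsP
        have hSc : S xs < c := lt_of_le_of_lt hSxs hGm
        have hcw : c < S xs + w xs := hGxs ▸ hclt
        have ht1 : 0 < (c - S xs) / w xs := div_pos (by linarith) hwx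
        have ht2 : (c - S xs) / w xs ≤ 1 := by
          rw [div_le_one hwx]
          linarith
        refine ⟨⟨mk xs ((c - S xs) / w xs) (Set.mem_Ioc.mpr ⟨ht1, ht2⟩) (Or.inr hsx), hfiber _ (by rw [rt_mk]; exact hxsP)⟩, ?_⟩
        rw [hFBdef, hFdef]
        simp only [rt_mk, rv_mk]
        simp only [hsx, ↓reduceIte, div_mul_cancel₀ _ (ne_of_gt hwx)]
        ring
      · exfalso
        have hGxs : G xs = S xs := by rw [hGS, if_neg hsx, add_zero]
        rw [hGxs] at hclt
        rw [hSdef] at hclt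
        have hhs := (hsum (Set.Iio xs ∩ WS)).hasSum
        have hev : ∀ᶠ s : Finset T in Filter.atTop,
            c < ∑ z ∈ s, (Set.Iio xs ∩ WS).indicator w z :=
          hhs.eventually (eventually_gt_nhds hclt)
        obtain ⟨s, hs⟩ := hev.exists
        classical
        set s' := s.filter (fun z => (Set.Iio xs ∩ WS).indicator w z ≠ 0) with hs'
        have hsum_eq : ∑ z ∈ s', (Set.Iio xs ∩ WS).indicator w z
            = ∑ z ∈ s, (Set.Iio xs ∩ WS).indicator w z := Finset.sum_filter_ne_zero s
        have hs'ne : s'.Nonempty := by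
          rw [Finset.nonempty_iff_ne_empty]
          intro h
          rw [h, Finset.sum_empty] at hsum_eq
          rw [← hsum_eq] at hs
          linarith
        have hmem : ∀ z ∈ s', z < xs ∧ SuccRank z := by
          intro z hz
          have h2 := (Finset.mem_filter.mp hz).2
          by_contra h
          exact h2 (Set.indicator_of_notMem (fun hh => h ⟨hh.1, hh.2⟩) w)
        obtain ⟨zm, hzm, hzmax⟩ := Set.Finite.exists_maximalFor id (↑s' : Set T)
          s'.finite_toSet (by exact_mod_cast hs'ne)
        rw [Finset.mem_coe] at hzm
        have hzmax' : ∀ z ∈ s', z ≤ zm := by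
          intro z hz
          rcases hDL xs z zm (le_of_lt (hmem z hz).1) (le_of_lt (hmem zm hzm).1) with h | h
          · exact h
          · exact hzmax (Finset.mem_coe.mpr hz) h
        have hle1 : ∑ z ∈ s', (Set.Iio xs ∩ WS).indicator w z
            ≤ ∑ z ∈ s', (Set.Iic zm ∩ WS).indicator w z := by
          apply Finset.sum_le_sum
          intro z hz
          have h1 := hmem z hz
          have e1 : (Set.Iio xs ∩ WS).indicator w z = w z :=
            Set.indicator_of_mem (Set.mem_inter (show z ∈ Set.Iio xs from h1.1)
              (show z ∈ WS from h1.2)) w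
          have e2 : (Set.Iic zm ∩ WS).indicator w z = w z :=
            Set.indicator_of_mem (Set.mem_inter (show z ∈ Set.Iic zm from hzmax' z hz)
              (show z ∈ WS from h1.2)) w
          rw [e1, e2]
        have hle2 : ∑ z ∈ s', (Set.Iic zm ∩ WS).indicator w z ≤ G zm := by
          rw [hGdef]
          exact Summable.sum_le_tsum s' (fun z _ => Set.indicator_nonneg (fun a _ => hw0 a) z) (hsum _)
        have hzmy : zm ≤ rt q.1 := le_trans (le_of_lt (hmem zm hzm).1) hxsU.1
        have hfin := hxsmin zm hzmy (hmem zm hzm).1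
        rw [← hsum_eq] at hs
        linarith
  · -- the order isomorphism
    refine ⟨⟨Equiv.ofInjective FB hFBinj, ?_⟩⟩
    intro p q
    rw [Equiv.ofInjective_apply, Equiv.ofInjective_apply, Subtype.mk_le_mk]
    exact hFBle p q



/-- In a tree with all chains and antichains countable, there is no strictly
monotone real-valued map, unless the tree is countable. -/
lemma no_strict_mono (hDL : DownLinear T) (hWF : ∀ x : T, (Set.Iio x).IsWF)
    (hUnc : ¬ (Set.univ : Set T).Countable)
    (hchain : ∀ C : Set T, IsChain (· ≤ ·) C → C.Countable)
    (hanti : ∀ A : Set T, IsAntichain (· ≤ ·) A → A.Countable)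
    (f : T → ℝ) (hf : StrictMono f) : False := by
  classical
  -- maximal elements
  set M : Set T := {x | ∀ y, ¬ x < y} with hM
  have hMc : M.Countable := by
    apply hanti
    intro a ha b hb hne hle
    exact ha b (lt_of_le_of_ne hle hne)
  -- for each rational q, minimal elements of {z | q < f z}
  set Mn : ℚ → Set T := fun q => {z | (q:ℝ) < f z ∧ ∀ w, (q:ℝ) < f w → ¬ w < z} with hMn
  have hMnc : ∀ q, (Mn q).Countable := by
    intro q
    apply hanti
    intro a ha b hb hne hle
    exact hb.2 a ha.1 (lt_of_le_of_ne hle hne)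
  have hIio : ∀ z : T, (Set.Iio z).Countable := by
    intro z
    apply hchain
    intro a ha b hb _
    exact hDL z a b (le_of_lt ha) (le_of_lt hb)
  have hcover : (Set.univ : Set T) ⊆ M ∪ ⋃ q : ℚ, ⋃ z ∈ Mn q, Set.Iio z := by
    intro x _
    by_cases hx : x ∈ M
    · exact Or.inl hx
    · right
      simp only [hM, Set.mem_setOf_eq, not_forall, not_not] at hx
      obtain ⟨y, hy⟩ := hx
      obtain ⟨q, hq1, hq2⟩ := exists_rat_btwn (hf hy)
      -- least element of {w ≤ y | q < f w}
      set U : Set T := {w | w ≤ y ∧ (q:ℝ) < f w} with hU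
      have hUwf : U.IsWF := by
        have : U ⊆ insert y (Set.Iio y) := by
          intro w hw
          rcases lt_or_eq_of_le hw.1 with h | h
          · exact Set.mem_insert_of_mem _ h
          · simp [h]
        exact ((hWF y).insert y).mono this
      have hUne : U.Nonempty := ⟨y, le_refl y, hq2⟩
      set z := hUwf.min hUne with hz
      have hzU : z ∈ U := hUwf.min_mem hUne
      have hzmin : ∀ w ∈ U, ¬ w < z := fun w hw => hUwf.not_lt_min hUne hw
      have hzMn : z ∈ Mn q := by
        refine ⟨hzU.2, fun w hw hwz => ?_⟩
        exact hzmin w ⟨le_of_lt (lt_of_lt_of_le hwz hzU.1), hw⟩ hwz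
      have hxz : x < z := by
        have hcomp : x ≤ z ∨ z ≤ x := hDL y x z (le_of_lt hy) hzU.1
        rcases hcomp with h | h
        · rcases lt_or_eq_of_le h with h' | h'
          · exact h'
          · exfalso; rw [← h'] at hzU; exact absurd hzU.2 (not_lt.mpr (le_of_lt hq1))
        · exfalso
          have := hf.monotone h
          exact absurd (lt_of_lt_of_le hzU.2 this) (not_lt.mpr (le_of_lt hq1))
      exact Set.mem_iUnion.mpr ⟨q, Set.mem_iUnion.mpr ⟨z, Set.mem_iUnion.mpr ⟨hzMn, hxz⟩⟩⟩
  apply hUnc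
  apply Set.Countable.mono hcover
  apply Set.Countable.union hMc
  apply Set.countable_iUnion
  intro q
  exact Set.Countable.biUnion (hMnc q) (fun z _ => hIio z)


end RoadAux

/-- The road space of a (Hausdorff) Suslin tree — a well-stratified,
uncountable, meet-semilattice tree in which all chains and all antichains
are countable — is a ccc branchwise-real tree order with no continuous
grading. -/
theorem road_space_of_suslin_tree (T : Type*) [PartialOrder T]
    (hT : IsWSTree T)
    (hH : ∀ x y : T, ∃ m : T, IsGLB {x, y} m)
    (hUnc : ¬ (Set.univ : Set T).Countable)
    (hchain : ∀ C : Set T, IsChain (· ≤ ·) C → C.Countable)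
    (hanti : ∀ A : Set T, IsAntichain (· ≤ ·) A → A.Countable) :
    IsBRTO (Road T) ∧
      (∀ A : Set (Road T), IsAntichain (· ≤ ·) A → A.Countable) ∧
      ¬ ∃ ℓ : Road T → ℝ, IsContinuousGrading ℓ := by
  obtain ⟨hRoot, hDLt, hWFt⟩ := hT
  refine ⟨⟨RoadAux.road_rooted hRoot, RoadAux.road_downLinear hDLt, ?_,
      RoadAux.road_meets hH⟩, RoadAux.road_ccc hanti, ?_⟩
  · intro B hBmax
    exact RoadAux.road_branch hDLt hWFt hchain B hBmax
  · rintro ⟨ℓ, hℓ, -⟩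
    exact RoadAux.no_strict_mono hDLt hWFt hUnc hchain hanti
      (fun x => ℓ (RoadAux.top x)) (fun x y h => hℓ (RoadAux.top_strictMono h))
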